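/- The number of totally disconnected subsets D of {1,...,N} with exactly j elements lying in even positions and i elements in odd positions gives, after the substitution w_k = x_{[k+1]}^2 with N = 2n, the coefficient C(n-r, q) C(n-q, r) of x_1^{2q} x_2^{2r} in x_1^n x_2^n s_n; i.e., F(w_1,...,w_{2n})|_{w_{2k-1}=u, w_{2k}=v} = Σ_{q+r≤n} C(n-r,q) C(n-q,r) u^q v^r. -/

import Mathlib

open Finset

/-- Fibonacci polynomial: sum over totally disconnected subsets of {1,...,N}. -/
def fibPoly {R : Type*} [CommRing R] (w : ℕ → R) (N : ℕ) : R :=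
  ∑ D ∈ (Finset.Icc 1 N).powerset.filter (fun D => ∀ k ∈ D, k + 1 ∉ D), ∏ k ∈ D, w k

def aC (n q r : ℕ) : ℕ := (n - r).choose q * (n - q).choose r
def bC (n q r : ℕ) : ℕ := (n + 1 - r).choose q * (n - q).choose r

lemma aC_zero {n q r : ℕ} (h : n < q + r) : aC n q r = 0 := by
  unfold aC
  rcases le_or_gt r n with h1 | h1
  · have : n - r < q := by omega
    simp [Nat.choose_eq_zero_of_lt this]
  · have : n - q < r := by omega
    simp [Nat.choose_eq_zero_of_lt this]

lemma bC_zero {n q r : ℕ} (h : n + 1 < q + r) : bC n q r = 0 := by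
  unfold bC
  rcases le_or_gt r (n+1) with h1 | h1
  · have : n + 1 - r < q := by omega
    simp [Nat.choose_eq_zero_of_lt this]
  · have : n - q < r := by omega
    simp [Nat.choose_eq_zero_of_lt this]

lemma aC_pascal (n q r : ℕ) : aC (n+1) q (r+1) = bC n q (r+1) + aC n q r := by
  rcases le_or_gt q n with h | h
  · unfold aC bC
    have h1 : n + 1 - q = (n - q) + 1 := by omega
    have h2 : n + 1 - (r + 1) = n - r := by omega
    rw [h1, h2, Nat.choose_succ_succ]
    ring
  · have h1 : (n - r).choose q = 0 := Nat.choose_eq_zero_of_lt (by omega)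
    unfold aC bC
    have h2 : n + 1 - (r + 1) = n - r := by omega
    rw [h2, h1]
    simp

lemma aC_base (n q : ℕ) : aC (n+1) q 0 = bC n q 0 := by simp [aC, bC]

lemma bC_pascal (n q r : ℕ) : bC (n+1) (q+1) r = aC (n+1) (q+1) r + bC n q r := by
  rcases le_or_gt r (n+1) with h | h
  · unfold aC bC
    have h1 : n + 2 - r = (n + 1 - r) + 1 := by omega
    have h2 : n + 1 - (q + 1) = n - q := by omega
    rw [h1, h2, Nat.choose_succ_succ]
    ring
  · have h1 : (n - q).choose r = 0 := Nat.choose_eq_zero_of_lt (by omega)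
    have h1' : (n + 1 - (q+1)).choose r = 0 := Nat.choose_eq_zero_of_lt (by omega)
    unfold aC bC
    rw [h1, h1']
    simp

lemma bC_base (n r : ℕ) : bC (n+1) 0 r = aC (n+1) 0 r := by simp [aC, bC]

section Aux
variable {R : Type*} [CommRing R]

def Esq (u v : R) (n M : ℕ) : R :=
  ∑ q ∈ range M, ∑ r ∈ range M, (aC n q r : R) * (u ^ q * v ^ r)

def Osq (u v : R) (n M : ℕ) : R :=
  ∑ q ∈ range M, ∑ r ∈ range M, (bC n q r : R) * (u ^ q * v ^ r)

lemma Esq_succ (u v : R) (n M : ℕ) (h : n + 1 ≤ M) : Esq u v n (M+1) = Esq u v n M := by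
  unfold Esq
  rw [Finset.sum_range_succ]
  have h1 : ∑ r ∈ range (M+1), (aC n M r : R) * (u ^ M * v ^ r) = 0 := by
    apply Finset.sum_eq_zero
    intro r _
    rw [aC_zero (by omega), Nat.cast_zero, zero_mul]
  rw [h1, add_zero]
  refine Finset.sum_congr rfl fun q hq => ?_
  rw [Finset.sum_range_succ, aC_zero (show n < q + M by omega), Nat.cast_zero, zero_mul,
    add_zero]

lemma L2 (u v : R) (n M : ℕ) (h : n + 1 ≤ M) :
    Esq u v (n+1) (M+1) = Osq u v n (M+1) + v * Esq u v n M := by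
  unfold Esq Osq
  have key : ∀ q : ℕ,
      ∑ r ∈ range (M+1), (aC (n+1) q r : R) * (u ^ q * v ^ r)
        = (∑ r ∈ range (M+1), (bC n q r : R) * (u ^ q * v ^ r))
          + v * ∑ r ∈ range M, (aC n q r : R) * (u ^ q * v ^ r) := by
    intro q
    rw [Finset.sum_range_succ' (fun r => (aC (n+1) q r : R) * (u ^ q * v ^ r)),
        Finset.sum_range_succ' (fun r => (bC n q r : R) * (u ^ q * v ^ r)),
        Finset.mul_sum]
    have e0 : ((aC (n+1) q 0 : ℕ) : R) = (bC n q 0 : ℕ) := by rw [aC_base]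
    simp only [aC_pascal, Nat.cast_add, add_mul, e0]
    rw [Finset.sum_add_distrib]
    have step : ∑ r ∈ range M, (aC n q r : R) * (u ^ q * v ^ (r+1))
        = v * ∑ r ∈ range M, (aC n q r : R) * (u ^ q * v ^ r) := by
      rw [Finset.mul_sum]
      exact Finset.sum_congr rfl fun r _ => by ring
    rw [step, Finset.mul_sum]
    ring
  calc ∑ q ∈ range (M+1), ∑ r ∈ range (M+1), (aC (n+1) q r : R) * (u ^ q * v ^ r)
      = ∑ q ∈ range (M+1), ((∑ r ∈ range (M+1), (bC n q r : R) * (u ^ q * v ^ r))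
          + v * ∑ r ∈ range M, (aC n q r : R) * (u ^ q * v ^ r)) :=
        Finset.sum_congr rfl fun q _ => key q
    _ = (∑ q ∈ range (M+1), ∑ r ∈ range (M+1), (bC n q r : R) * (u ^ q * v ^ r))
          + ∑ q ∈ range (M+1), v * ∑ r ∈ range M, (aC n q r : R) * (u ^ q * v ^ r) := by
        rw [Finset.sum_add_distrib]
    _ = _ := by
        congr 1
        rw [Finset.sum_range_succ]
        have : ∑ r ∈ range M, (aC n M r : R) * (u ^ M * v ^ r) = 0 := by
          apply Finset.sum_eq_zero
          intro r _
          rw [aC_zero (by omega), Nat.cast_zero, zero_mul]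
        rw [this, mul_zero, add_zero, Finset.mul_sum]

lemma L1 (u v : R) (n M : ℕ) (h : n + 2 ≤ M) :
    Osq u v (n+1) (M+1) = Esq u v (n+1) (M+1) + u * Osq u v n M := by
  unfold Esq Osq
  rw [Finset.sum_range_succ' (fun q => ∑ r ∈ range (M+1), (bC (n+1) q r : R) * (u ^ q * v ^ r)),
      Finset.sum_range_succ' (fun q => ∑ r ∈ range (M+1), (aC (n+1) q r : R) * (u ^ q * v ^ r))]
  have e0 : ∑ r ∈ range (M+1), (bC (n+1) 0 r : R) * (u ^ 0 * v ^ r)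
      = ∑ r ∈ range (M+1), (aC (n+1) 0 r : R) * (u ^ 0 * v ^ r) := by
    refine Finset.sum_congr rfl fun r _ => by rw [bC_base]
  rw [e0]
  have key : ∀ q, ∑ r ∈ range (M+1), (bC (n+1) (q+1) r : R) * (u ^ (q+1) * v ^ r)
      = (∑ r ∈ range (M+1), (aC (n+1) (q+1) r : R) * (u ^ (q+1) * v ^ r))
        + u * ∑ r ∈ range M, (bC n q r : R) * (u ^ q * v ^ r) := by
    intro q
    simp only [bC_pascal, Nat.cast_add, add_mul]
    rw [Finset.sum_add_distrib, Finset.mul_sum]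
    congr 1
    rw [Finset.sum_range_succ, bC_zero (show n + 1 < q + M by omega), Nat.cast_zero, zero_mul,
      add_zero]
    refine Finset.sum_congr rfl fun r _ => by ring
  calc (∑ q ∈ range M, ∑ r ∈ range (M+1), (bC (n+1) (q+1) r : R) * (u ^ (q+1) * v ^ r))
        + ∑ r ∈ range (M+1), (aC (n+1) 0 r : R) * (u ^ 0 * v ^ r)
      = (∑ q ∈ range M, ((∑ r ∈ range (M+1), (aC (n+1) (q+1) r : R) * (u ^ (q+1) * v ^ r))
          + u * ∑ r ∈ range M, (bC n q r : R) * (u ^ q * v ^ r)))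
        + ∑ r ∈ range (M+1), (aC (n+1) 0 r : R) * (u ^ 0 * v ^ r) := by
        rw [Finset.sum_congr rfl fun q _ => key q]
    _ = _ := by
        rw [Finset.sum_add_distrib, Finset.mul_sum]
        ring

lemma fibPoly_zero (w : ℕ → R) : fibPoly w 0 = 1 := by
  simp [fibPoly, Finset.filter_singleton]

lemma fibPoly_one (w : ℕ → R) : fibPoly w 1 = 1 + w 1 := by
  have h : Finset.Icc 1 1 = ({1} : Finset ℕ) := Finset.Icc_self 1
  rw [fibPoly, h]
  rw [show ({1} : Finset ℕ).powerset = {∅, {1}} from rfl]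
  rw [Finset.filter_insert]
  simp only [Finset.filter_singleton]
  norm_num

lemma fibPoly_rec (w : ℕ → R) (N : ℕ) :
    fibPoly w (N+2) = fibPoly w (N+1) + w (N+2) * fibPoly w N := by
  classical
  set P : Finset ℕ → Prop := fun D => ∀ k ∈ D, k + 1 ∉ D with hP
  have hsplit :
      (Finset.Icc 1 (N+2)).powerset.filter (fun D => ∀ k ∈ D, k + 1 ∉ D)
        = (Finset.Icc 1 (N+1)).powerset.filter (fun D => ∀ k ∈ D, k + 1 ∉ D)
          ∪ ((Finset.Icc 1 N).powerset.filter (fun D => ∀ k ∈ D, k + 1 ∉ D)).image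
              (insert (N+2)) := by
    ext D
    simp only [Finset.mem_union, Finset.mem_image, Finset.mem_filter, Finset.mem_powerset]
    constructor
    · rintro ⟨hsub, hd⟩
      by_cases hm : N + 2 ∈ D
      · right
        refine ⟨D.erase (N+2), ⟨?_, ?_⟩, ?_⟩
        · intro x hx
          have hx1 := Finset.mem_of_mem_erase hx
          have hxne : x ≠ N + 2 := Finset.ne_of_mem_erase hx
          have hxi := hsub hx1
          rw [Finset.mem_Icc] at hxi ⊢
          have hxne1 : x ≠ N + 1 := by
            intro heq
            subst heq
            exact hd (N+1) hx1 hm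
          omega
        · intro k hk
          intro hk1
          exact hd k (Finset.mem_of_mem_erase hk) (Finset.mem_of_mem_erase hk1)
        · exact Finset.insert_erase hm
      · left
        refine ⟨fun x hx => ?_, hd⟩
        have hxi := hsub hx
        rw [Finset.mem_Icc] at hxi ⊢
        have : x ≠ N + 2 := fun heq => hm (heq ▸ hx)
        omega
    · rintro (⟨hsub, hd⟩ | ⟨D', ⟨hsub, hd⟩, rfl⟩)
      · exact ⟨hsub.trans (Finset.Icc_subset_Icc_right (by omega)), hd⟩
      · have hD'bound : ∀ x ∈ D', 1 ≤ x ∧ x ≤ N := by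
          intro x hx
          have := hsub hx
          rw [Finset.mem_Icc] at this
          exact this
        constructor
        · intro x hx
          rw [Finset.mem_insert] at hx
          rw [Finset.mem_Icc]
          rcases hx with rfl | hx
          · omega
          · have := hD'bound x hx; omega
        · intro k hk hk1
          rw [Finset.mem_insert] at hk hk1
          rcases hk with rfl | hk
          · rcases hk1 with h | h
            · omega
            · have := hD'bound _ h; omega
          · rcases hk1 with h | h
            · have := hD'bound _ hk; omega
            · exact hd k hk h
  have hdisj : Disjoint
      ((Finset.Icc 1 (N+1)).powerset.filter (fun D => ∀ k ∈ D, k + 1 ∉ D))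
      (((Finset.Icc 1 N).powerset.filter (fun D => ∀ k ∈ D, k + 1 ∉ D)).image
        (insert (N+2))) := by
    rw [Finset.disjoint_left]
    rintro D hD1 hD2
    simp only [Finset.mem_filter, Finset.mem_powerset] at hD1
    simp only [Finset.mem_image, Finset.mem_filter, Finset.mem_powerset] at hD2
    obtain ⟨D', _, rfl⟩ := hD2
    have := hD1.1 (Finset.mem_insert_self (N+2) D')
    rw [Finset.mem_Icc] at this
    omega
  have hinj : ∀ D ∈ (Finset.Icc 1 N).powerset.filter (fun D => ∀ k ∈ D, k + 1 ∉ D),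
      ∀ D' ∈ (Finset.Icc 1 N).powerset.filter (fun D => ∀ k ∈ D, k + 1 ∉ D),
      insert (N+2) D = insert (N+2) D' → D = D' := by
    intro D hD D' hD' hEq
    simp only [Finset.mem_filter, Finset.mem_powerset] at hD hD'
    have hnD : N + 2 ∉ D := fun hm => by
      have := hD.1 hm; rw [Finset.mem_Icc] at this; omega
    have hnD' : N + 2 ∉ D' := fun hm => by
      have := hD'.1 hm; rw [Finset.mem_Icc] at this; omega
    have := congrArg (fun s => Finset.erase s (N+2)) hEq
    simpa [Finset.erase_insert hnD, Finset.erase_insert hnD'] using this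
  rw [fibPoly, hsplit, Finset.sum_union hdisj]
  congr 1
  rw [Finset.sum_image hinj]
  rw [fibPoly, Finset.mul_sum]
  refine Finset.sum_congr rfl fun D hD => ?_
  simp only [Finset.mem_filter, Finset.mem_powerset] at hD
  have hnm : N + 2 ∉ D := by
    intro hm
    have := hD.1 hm
    rw [Finset.mem_Icc] at this
    omega
  rw [Finset.prod_insert hnm]

lemma fib_closed (u v : R) (n : ℕ) :
    fibPoly (fun k => if k % 2 = 1 then u else v) (2*n) = Esq u v n (n+1) ∧
    fibPoly (fun k => if k % 2 = 1 then u else v) (2*n+1) = Osq u v n (n+2) := by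
  set w : ℕ → R := fun k => if k % 2 = 1 then u else v with hw
  induction n with
  | zero =>
    constructor
    · rw [show 2*0 = 0 from rfl, fibPoly_zero]
      simp [Esq, aC]
    · rw [show 2*0+1 = 1 from rfl, fibPoly_one]
      have hw1 : w 1 = u := by simp [hw]
      rw [hw1]
      norm_num [Osq, bC, Finset.sum_range_succ]
  | succ n ih =>
    obtain ⟨ihE, ihO⟩ := ih
    have hwv : w (2*n+2) = v := by
      have h2 : (2*n+2) % 2 = 0 := by omega
      simp [hw, h2]
    have hwu : w (2*n+2+1) = u := by
      have h2 : (2*n+2+1) % 2 = 1 := by omega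
      simp [hw, h2]
    have e1 : fibPoly w (2*(n+1)) = Esq u v (n+1) (n+2) := by
      rw [show 2*(n+1) = 2*n+2 by ring, fibPoly_rec w (2*n), ihE, ihO, hwv]
      exact (L2 u v n (n+1) le_rfl).symm
    refine ⟨e1, ?_⟩
    rw [show 2*(n+1)+1 = (2*n+1)+2 by ring, fibPoly_rec w (2*n+1),
      show 2*n+1+1 = 2*(n+1) by ring, e1, ihO,
      show (2*n+1+2) = 2*n+2+1 by ring, hwu]
    rw [show n+1+2 = (n+2)+1 by ring, L1 u v n (n+2) le_rfl,
      Esq_succ u v (n+1) (n+2) (by omega)]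

end Aux

theorem fibPoly_even_specialization {R : Type*} [CommRing R] (u v : R) (n : ℕ) :
    fibPoly (fun k => if k % 2 = 1 then u else v) (2 * n) =
      ∑ q ∈ Finset.range (n + 1), ∑ r ∈ Finset.range (n + 1 - q),
        ((n - r).choose q * (n - q).choose r : ℕ) • (u ^ q * v ^ r) := by
  rw [(fib_closed u v n).1, Esq]
  refine Finset.sum_congr rfl fun q hq => ?_
  rw [Finset.mem_range] at hq
  have hsub : Finset.range (n+1-q) ⊆ Finset.range (n+1) :=
    Finset.range_subset_range.2 (by omega)
  have hz : ∀ r ∈ Finset.range (n+1), r ∉ Finset.range (n+1-q) →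
      (aC n q r : R) * (u ^ q * v ^ r) = 0 := by
    intro r _ hr
    rw [Finset.mem_range] at hr
    rw [aC_zero (by omega), Nat.cast_zero, zero_mul]
  rw [← Finset.sum_subset hsub hz]
  exact Finset.sum_congr rfl fun r _ => by simp [aC, nsmul_eq_mul]
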